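/- There exists a finite matching market instance with individual-level tie-breakers, families of size at most two, and two levels, in which no contingent stable matching under partial contingent priorities exists. -/

import Mathlib

open scoped Classical

/-- A many-to-one matching market with levels, families, priority groups and
random tie-breakers, as in "Stable Matching with Contingent Priorities". -/
structure Market where
  Student : Type
  School : Type
  Level : Type
  [instFinS : Fintype Student]
  [instDecS : DecidableEq Student]
  [instFinC : Fintype School]
  [instDecC : DecidableEq School]
  [instFinL : Fintype Level]
  [instDecL : DecidableEq Level]
  level : Student → Level
  sameFamily : Student → Student → Prop
  fam_refl : ∀ s, sameFamily s s
  fam_symm : ∀ s s', sameFamily s s' → sameFamily s' s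
  fam_trans : ∀ s s' s'', sameFamily s s' → sameFamily s' s'' → sameFamily s s''
  cap : School → Level → ℕ
  /-- strict preference of each student over schools plus the outside option `none` -/
  pref : Student → Option School → Option School → Prop
  pref_irrefl : ∀ s o, ¬ pref s o o
  pref_trans : ∀ s o₁ o₂ o₃, pref s o₁ o₂ → pref s o₂ o₃ → pref s o₁ o₃
  pref_total : ∀ s o o', o ≠ o' → pref s o o' ∨ pref s o' o
  nGroups : ℕ
  nGroups_pos : 1 ≤ nGroups
  group : Student → School → ℕ
  group_pos : ∀ s c, 1 ≤ group s c
  group_le : ∀ s c, group s c ≤ nGroups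
  /-- random tie-breakers (smaller is better) -/
  tb : Student → School → ℝ
  tb_distinct : ∀ c s s', s ≠ s' → tb s c ≠ tb s' c

attribute [instance] Market.instFinS Market.instDecS Market.instFinC
  Market.instDecC Market.instFinL Market.instDecL

namespace Market

variable (M : Market)

/-- `s` weakly prefers `o` to `o'`. -/
def wPref (s : M.Student) (o o' : Option M.School) : Prop :=
  o = o' ∨ M.pref s o o'

/-- A feasible matching: every assigned student finds their school acceptable and the
school offers seats at their level, and per-level capacities are respected. -/
def IsMatching (μ : M.Student → Option M.School) : Prop :=
  (∀ s c, μ s = some c → M.pref s (some c) none ∧ 0 < M.cap c (M.level s)) ∧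
  (∀ c ℓ, (Finset.univ.filter fun s => μ s = some c ∧ M.level s = ℓ).card ≤ M.cap c ℓ)

/-- Number of students of level `ℓ` assigned to `c`. -/
noncomputable def assignedCount (μ : M.Student → Option M.School) (c : M.School)
    (ℓ : M.Level) : ℕ :=
  (Finset.univ.filter fun s => μ s = some c ∧ M.level s = ℓ).card

/-- Non-wastefulness. -/
def NonWasteful (μ : M.Student → Option M.School) : Prop :=
  ¬ ∃ s c, M.pref s (some c) (μ s) ∧
    M.assignedCount μ c (M.level s) < M.cap c (M.level s)

/-- Initial priority order at school `c` (groups first, tie-breakers second). -/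
def initPrio (c : M.School) (s s' : M.Student) : Prop :=
  M.group s c < M.group s' c ∨ (M.group s c = M.group s' c ∧ M.tb s c < M.tb s' c)

/-- Initial stability. -/
def InitStable (μ : M.Student → Option M.School) : Prop :=
  M.IsMatching μ ∧ M.NonWasteful μ ∧
  ¬ ∃ s s' c, μ s' = some c ∧ M.level s = M.level s' ∧
      M.pref s (some c) (μ s) ∧ M.initPrio c s s'

/-- Number of students of `s`'s level with strictly higher initial priority at `c`
who weakly prefer `c` to their match. -/
noncomputable def rivalCount (μ : M.Student → Option M.School) (s : M.Student)
    (c : M.School) : ℕ :=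
  (Finset.univ.filter fun s'' => M.level s'' = M.level s ∧ M.initPrio c s'' s ∧
    M.wPref s'' (some c) (μ s'')).card

/-- `s` provides contingent priority at `c` (Definition 2, refined). -/
def Provides (μ : M.Student → Option M.School) (s : M.Student) (c : M.School) : Prop :=
  μ s = some c ∧
  (∃ s', s' ≠ s ∧ M.sameFamily s s' ∧ M.wPref s' (some c) (μ s')) ∧
  M.rivalCount μ s c < M.cap c (M.level s)

/-- `s` is the effective priority provider of their family at `c`: the provider with
the most favorable tie-breaker. -/
def EffProvider (μ : M.Student → Option M.School) (s : M.Student) (c : M.School) : Prop :=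
  M.Provides μ s c ∧
  ∀ s', s' ≠ s → M.sameFamily s s' → M.Provides μ s' c → M.tb s c < M.tb s' c

/-- Contingent group under absolute priorities. -/
noncomputable def absGroup (μ : M.Student → Option M.School) (s : M.Student)
    (c : M.School) : ℕ :=
  if M.group s c < M.nGroups ∨
      (M.EffProvider μ s c ∧ ∃ s', s' ≠ s ∧ M.sameFamily s s' ∧ μ s' = some c) ∨
      (∃ s', s' ≠ s ∧ M.sameFamily s s' ∧ M.EffProvider μ s' c)
  then M.group s c else M.nGroups + 1

/-- Contingent priority order under absolute priorities. -/
noncomputable def absPrio (μ : M.Student → Option M.School) (c : M.School)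
    (s s' : M.Student) : Prop :=
  M.absGroup μ s c < M.absGroup μ s' c ∨
  (M.absGroup μ s c = M.absGroup μ s' c ∧ M.tb s c < M.tb s' c)

/-- Contingent stability under absolute priorities. -/
def AbsStable (μ : M.Student → Option M.School) : Prop :=
  M.IsMatching μ ∧ M.NonWasteful μ ∧
  ¬ ∃ s s' c, μ s' = some c ∧ M.level s = M.level s' ∧
      M.pref s (some c) (μ s) ∧ M.absPrio μ c s s'

/-- Contingent tie-breaker under partial priorities: a no-priority student inherits
their effective provider's tie-breaker when it is more favorable. -/
noncomputable def partialTb (μ : M.Student → Option M.School) (s : M.Student)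
    (c : M.School) : ℝ :=
  if h : M.group s c = M.nGroups ∧ ¬ M.EffProvider μ s c ∧
      ∃ s', s' ≠ s ∧ M.sameFamily s s' ∧ M.EffProvider μ s' c ∧ M.tb s' c < M.tb s c
  then M.tb h.2.2.choose c
  else M.tb s c

/-- Contingent priority order under partial priorities: groups unchanged, contingent
tie-breakers first, with residual ties (within a family) broken by the initial
tie-breakers (the ε-perturbation of Definition 5). -/
noncomputable def partialPrio (μ : M.Student → Option M.School) (c : M.School)
    (s s' : M.Student) : Prop :=
  M.group s c < M.group s' c ∨
  (M.group s c = M.group s' c ∧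
    (M.partialTb μ s c < M.partialTb μ s' c ∨
      (M.partialTb μ s c = M.partialTb μ s' c ∧ M.tb s c < M.tb s' c)))

/-- Contingent stability under partial priorities. -/
def PartialStable (μ : M.Student → Option M.School) : Prop :=
  M.IsMatching μ ∧ M.NonWasteful μ ∧
  ¬ ∃ s s' c, μ s' = some c ∧ M.level s = M.level s' ∧
      M.pref s (some c) (μ s) ∧ M.partialPrio μ c s s'

/-- Tie-breakers are at the family level: members of a family compare the same way
against any student outside the family. -/
def FamilyTB : Prop :=
  ∀ c (s s' a : M.Student), M.sameFamily s s' → ¬ M.sameFamily s a →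
    (M.tb s c < M.tb a c ↔ M.tb s' c < M.tb a c)

/-- Size of the family of `s`. -/
noncomputable def famSize (s : M.Student) : ℕ :=
  (Finset.univ.filter fun s' => M.sameFamily s s').card

/-- Number of families in the market. -/
noncomputable def numFamilies : ℕ :=
  (Finset.univ.image fun s : M.Student =>
    Finset.univ.filter fun s' => M.sameFamily s s').card

/-- Rank of an outcome in a student's preference list (`none` gets rank `|≻ₛ|+1`,
the penalty for being unassigned). -/
noncomputable def rankVal (s : M.Student) (o : Option M.School) : ℕ :=
  (Finset.univ.filter fun c : M.School => M.pref s (some c) o).card + 1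

/-- Total rank objective of a matching. -/
noncomputable def cost (μ : M.Student → Option M.School) : ℕ :=
  ∑ s, M.rankVal s (μ s)

/-- Rank-optimal contingent stable matching under absolute priorities. -/
def RankOptAbs (μ : M.Student → Option M.School) : Prop :=
  M.AbsStable μ ∧ ∀ μ', M.AbsStable μ' → M.cost μ ≤ M.cost μ'

/-- Rank-optimal contingent stable matching under partial priorities. -/
def RankOptPartial (μ : M.Student → Option M.School) : Prop :=
  M.PartialStable μ ∧ ∀ μ', M.PartialStable μ' → M.cost μ ≤ M.cost μ'

end Market

namespace NoPartialEx

/-- Families: {0,1} and {2,3}. -/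
def fam : Fin 4 → Fin 2 := ![0, 0, 1, 1]

/-- The (unique) other member of each student's family. -/
def sib : Fin 4 → Fin 4 := ![1, 0, 3, 2]

/-- Tie-breakers (as naturals). -/
def T : Fin 4 → Fin 2 → ℕ := ![![0, 2], ![2, 0], ![3, 3], ![1, 1]]

/-- Preference ranks (lower = better). -/
def rk : Fin 4 → Option (Fin 2) → ℕ := fun s o =>
  o.elim ((![2, 2, 2, 1] : Fin 4 → ℕ) s)
    (fun c => (![![1, 0], ![0, 1], ![0, 1], ![2, 0]] : Fin 4 → Fin 2 → ℕ) s c)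

/-- Capacities. -/
def capN : Fin 2 → Bool → ℕ := fun c _l => if c = 0 then 1 else 2

lemma rk_inj : ∀ (s : Fin 4) (o o' : Option (Fin 2)), rk s o = rk s o' → o = o' := by decide

lemma T_inj : ∀ (c : Fin 2) (s s' : Fin 4), s ≠ s' → T s c ≠ T s' c := by decide

lemma sib_unique : ∀ s s' : Fin 4, s' ≠ s → fam s = fam s' → s' = sib s := by decide

/-- The counterexample market. -/
noncomputable def Mex : Market where
  Student := Fin 4
  School := Fin 2
  Level := Bool
  level := fun _ => false
  sameFamily := fun s s' => fam s = fam s'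
  fam_refl := fun _ => rfl
  fam_symm := fun _ _ h => h.symm
  fam_trans := fun _ _ _ h h' => h.trans h'
  cap := capN
  pref := fun s o o' => rk s o < rk s o'
  pref_irrefl := fun _ _ => lt_irrefl _
  pref_trans := fun _ _ _ _ => lt_trans
  pref_total := by
    intro s o o' h
    have : rk s o ≠ rk s o' := fun he => h (rk_inj s o o' he)
    exact Ne.lt_or_gt this
  nGroups := 1
  nGroups_pos := le_refl 1
  group := fun _ _ => 1
  group_pos := fun _ _ => le_refl 1
  group_le := fun _ _ => le_refl 1
  tb := fun s c => (T s c : ℝ)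
  tb_distinct := fun c s s' h he => T_inj c s s' h (Nat.cast_inj.mp he)

lemma level_eq : Mex.level = fun _ => false := rfl
lemma group_eq : Mex.group = fun _ _ => 1 := rfl
lemma tb_eq : Mex.tb = fun s c => ((T s c : ℕ) : ℝ) := rfl
lemma pref_eq : Mex.pref = fun s o o' => rk s o < rk s o' := rfl
lemma sameFamily_eq : Mex.sameFamily = fun s s' => fam s = fam s' := rfl
lemma cap_eq : Mex.cap = capN := rfl
lemma nGroups_eq : Mex.nGroups = 1 := rfl

lemma initPrio_iff (c : Fin 2) (s s' : Fin 4) :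
    Mex.initPrio c s s' ↔ T s c < T s' c := by
  simp [Market.initPrio, group_eq, tb_eq, Nat.cast_lt]

lemma wPref_iff (s : Fin 4) (o o' : Option (Fin 2)) :
    Mex.wPref s o o' ↔ rk s o ≤ rk s o' := by
  constructor
  · rintro (rfl | h)
    · exact le_refl _
    · exact le_of_lt (by rw [pref_eq] at h; exact h)
  · intro h
    rcases lt_or_eq_of_le h with hl | he
    · exact Or.inr (by rw [pref_eq]; exact hl)
    · exact Or.inl (rk_inj s o o' he)

/-- Mirror of `rivalCount`. -/
def rivalN (μ : Fin 4 → Option (Fin 2)) (s : Fin 4) (c : Fin 2) : ℕ :=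
  (Finset.univ.filter fun s'' : Fin 4 =>
    T s'' c < T s c ∧ rk s'' (some c) ≤ rk s'' (μ s'')).card

lemma rival_eq (μ : Fin 4 → Option (Fin 2)) (s : Fin 4) (c : Fin 2) :
    Mex.rivalCount μ s c = rivalN μ s c := by
  unfold Market.rivalCount rivalN
  congr 1
  apply Finset.filter_congr
  intro s'' _
  constructor
  · rintro ⟨-, h1, h2⟩
    exact ⟨(initPrio_iff c s'' s).mp h1, (wPref_iff s'' _ _).mp h2⟩
  · rintro ⟨h1, h2⟩
    exact ⟨rfl, (initPrio_iff c s'' s).mpr h1, (wPref_iff s'' _ _).mpr h2⟩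

/-- Mirror of `Provides`. -/
def ProvidesN (μ : Fin 4 → Option (Fin 2)) (s : Fin 4) (c : Fin 2) : Prop :=
  μ s = some c ∧
  (∃ s', s' ≠ s ∧ fam s = fam s' ∧ rk s' (some c) ≤ rk s' (μ s')) ∧
  rivalN μ s c < capN c false

instance (μ : Fin 4 → Option (Fin 2)) (s : Fin 4) (c : Fin 2) :
    Decidable (ProvidesN μ s c) := by unfold ProvidesN; infer_instance

lemma provides_iff (μ : Fin 4 → Option (Fin 2)) (s : Fin 4) (c : Fin 2) :
    Mex.Provides μ s c ↔ ProvidesN μ s c := by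
  unfold Market.Provides ProvidesN
  rw [rival_eq]
  refine and_congr Iff.rfl (and_congr ?_ Iff.rfl)
  constructor
  · rintro ⟨s', h1, h2, h3⟩
    exact ⟨s', h1, h2, (wPref_iff s' _ _).mp h3⟩
  · rintro ⟨s', h1, h2, h3⟩
    exact ⟨s', h1, h2, (wPref_iff s' _ _).mpr h3⟩

/-- Mirror of `EffProvider`. -/
def EffProviderN (μ : Fin 4 → Option (Fin 2)) (s : Fin 4) (c : Fin 2) : Prop :=
  ProvidesN μ s c ∧
  ∀ s', s' ≠ s → fam s = fam s' → ProvidesN μ s' c → T s c < T s' c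

instance (μ : Fin 4 → Option (Fin 2)) (s : Fin 4) (c : Fin 2) :
    Decidable (EffProviderN μ s c) := by unfold EffProviderN; infer_instance

lemma effProvider_iff (μ : Fin 4 → Option (Fin 2)) (s : Fin 4) (c : Fin 2) :
    Mex.EffProvider μ s c ↔ EffProviderN μ s c := by
  unfold Market.EffProvider EffProviderN
  refine and_congr (provides_iff μ s c) ?_
  constructor
  · intro h s' h1 h2 h3
    have := h s' h1 h2 ((provides_iff μ s' c).mpr h3)
    simp only [tb_eq] at this; exact_mod_cast this
  · intro h s' h1 h2 h3
    have h4 : T s c < T s' c := h s' h1 h2 ((provides_iff μ s' c).mp h3)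
    simp only [tb_eq]; exact_mod_cast h4

/-- Mirror of the inheritance condition in `partialTb`. -/
def condN (μ : Fin 4 → Option (Fin 2)) (s : Fin 4) (c : Fin 2) : Prop :=
  ¬ EffProviderN μ s c ∧
  ∃ s', s' ≠ s ∧ fam s = fam s' ∧ EffProviderN μ s' c ∧ T s' c < T s c

instance (μ : Fin 4 → Option (Fin 2)) (s : Fin 4) (c : Fin 2) :
    Decidable (condN μ s c) := by unfold condN; infer_instance

lemma cond_iff (μ : Fin 4 → Option (Fin 2)) (s : Fin 4) (c : Fin 2) :
    (Mex.group s c = Mex.nGroups ∧ ¬ Mex.EffProvider μ s c ∧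
      ∃ s', s' ≠ s ∧ Mex.sameFamily s s' ∧ Mex.EffProvider μ s' c ∧
        Mex.tb s' c < Mex.tb s c) ↔ condN μ s c := by
  unfold condN
  constructor
  · rintro ⟨-, h1, s', h2, h3, h4, h5⟩
    refine ⟨fun he => h1 ((effProvider_iff μ s c).mpr he), s', h2, h3,
      (effProvider_iff μ s' c).mp h4, ?_⟩
    simp only [tb_eq] at h5; exact_mod_cast h5
  · rintro ⟨h1, s', h2, h3, h4, h5⟩
    refine ⟨rfl, fun he => h1 ((effProvider_iff μ s c).mp he), s', h2, h3,
      (effProvider_iff μ s' c).mpr h4, ?_⟩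
    simp only [tb_eq]; exact_mod_cast h5

/-- Mirror of `partialTb`. -/
def ptbN (μ : Fin 4 → Option (Fin 2)) (s : Fin 4) (c : Fin 2) : ℕ :=
  if condN μ s c then T (sib s) c else T s c

lemma ptb_eq (μ : Fin 4 → Option (Fin 2)) (s : Fin 4) (c : Fin 2) :
    Mex.partialTb μ s c = ((ptbN μ s c : ℕ) : ℝ) := by
  unfold Market.partialTb ptbN
  split
  · next hC =>
      have h : condN μ s c := (cond_iff μ s c).mp hC
      rw [if_pos h]
      obtain ⟨hne, hfam, -, -⟩ := hC.2.2.choose_spec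
      have hs : hC.2.2.choose = sib s := sib_unique s _ hne hfam
      rw [hs]
      rfl
  · next hC =>
      rw [if_neg (fun h => hC ((cond_iff μ s c).mpr h))]
      rfl

/-- Mirror of `partialPrio`. -/
def pPrioN (μ : Fin 4 → Option (Fin 2)) (c : Fin 2) (s s' : Fin 4) : Prop :=
  ptbN μ s c < ptbN μ s' c ∨ (ptbN μ s c = ptbN μ s' c ∧ T s c < T s' c)

instance (μ : Fin 4 → Option (Fin 2)) (c : Fin 2) (s s' : Fin 4) :
    Decidable (pPrioN μ c s s') := by unfold pPrioN; infer_instance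

lemma pPrio_iff (μ : Fin 4 → Option (Fin 2)) (c : Fin 2) (s s' : Fin 4) :
    Mex.partialPrio μ c s s' ↔ pPrioN μ c s s' := by
  unfold Market.partialPrio pPrioN
  rw [ptb_eq, ptb_eq]
  simp [group_eq, tb_eq, Nat.cast_lt, Nat.cast_inj]

/-- Mirror of `IsMatching`. -/
def IsMatchingN (μ : Fin 4 → Option (Fin 2)) : Prop :=
  (∀ s c, μ s = some c → rk s (some c) < rk s none ∧ 0 < capN c false) ∧
  (∀ c : Fin 2, (Finset.univ.filter fun s : Fin 4 => μ s = some c).card ≤ capN c false)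

instance (μ : Fin 4 → Option (Fin 2)) : Decidable (IsMatchingN μ) := by
  unfold IsMatchingN; infer_instance

lemma isMatching_iff (μ : Fin 4 → Option (Fin 2)) :
    Mex.IsMatching μ ↔ IsMatchingN μ := by
  unfold Market.IsMatching IsMatchingN
  refine and_congr ?_ ?_
  · constructor
    · intro h s c hc
      obtain ⟨h1, h2⟩ := h s c hc
      exact ⟨by rw [pref_eq] at h1; exact h1, h2⟩
    · intro h s c hc
      obtain ⟨h1, h2⟩ := h s c hc
      exact ⟨by rw [pref_eq]; exact h1, h2⟩
  · constructor
    · intro h c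
      refine le_trans (le_of_eq ?_) (h c false)
      congr 1
      congr 1; funext x; simp [level_eq]; exact ⟨fun h => ⟨h, rfl⟩, fun h => h.1⟩
    · intro h c ℓ
      cases ℓ with
      | false =>
          refine le_trans (le_of_eq ?_) (h c)
          congr 1
          congr 1; funext x; simp [level_eq]; exact ⟨fun h => h.1, fun h => ⟨h, rfl⟩⟩
      | true =>
          refine le_trans (le_of_eq ?_) (Nat.zero_le _)
          rw [Finset.card_eq_zero]
          convert Finset.filter_false_of_mem (s := (Finset.univ : Finset Mex.Student))
            (p := fun s : Mex.Student => μ s = some c ∧ Mex.level s = true) (fun s _ h => Bool.false_ne_true h.2)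
          exact Iff.rfl

/-- Mirror of `assignedCount`. -/
def cnt (μ : Fin 4 → Option (Fin 2)) (c : Fin 2) : ℕ :=
  (Finset.univ.filter fun s : Fin 4 => μ s = some c).card

lemma assigned_eq (μ : Fin 4 → Option (Fin 2)) (c : Fin 2) (s : Fin 4) :
    Mex.assignedCount μ c (Mex.level s) = cnt μ c := by
  unfold Market.assignedCount cnt
  congr 1
  congr 1; funext x; simp [level_eq]; exact ⟨fun h => h.1, fun h => ⟨h, rfl⟩⟩

/-- Mirror of `NonWasteful`. -/
def NonWastefulN (μ : Fin 4 → Option (Fin 2)) : Prop :=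
  ¬ ∃ s c, rk s (some c) < rk s (μ s) ∧ cnt μ c < capN c false

instance (μ : Fin 4 → Option (Fin 2)) : Decidable (NonWastefulN μ) := by
  unfold NonWastefulN; infer_instance

lemma nonWasteful_iff (μ : Fin 4 → Option (Fin 2)) :
    Mex.NonWasteful μ ↔ NonWastefulN μ := by
  unfold Market.NonWasteful NonWastefulN
  apply not_congr
  constructor
  · rintro ⟨s, c, h1, h2⟩
    refine ⟨s, c, by rw [pref_eq] at h1; exact h1, ?_⟩
    rw [assigned_eq μ c s] at h2
    exact h2
  · rintro ⟨s, c, h1, h2⟩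
    refine ⟨s, c, by rw [pref_eq]; exact h1, ?_⟩
    rw [assigned_eq μ c s]
    exact h2

/-- Fully decidable mirror of `PartialStable`. -/
def StableN (μ : Fin 4 → Option (Fin 2)) : Prop :=
  IsMatchingN μ ∧ NonWastefulN μ ∧
  ¬ ∃ s s' c, μ s' = some c ∧ rk s (some c) < rk s (μ s) ∧ pPrioN μ c s s'

instance : DecidablePred StableN := fun μ => by unfold StableN; infer_instance

lemma stable_iff (μ : Fin 4 → Option (Fin 2)) :
    Mex.PartialStable μ ↔ StableN μ := by
  unfold Market.PartialStable StableN
  refine and_congr (isMatching_iff μ) (and_congr (nonWasteful_iff μ) (not_congr ?_))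
  constructor
  · rintro ⟨s, s', c, h1, -, h2, h3⟩
    exact ⟨s, s', c, h1, by rw [pref_eq] at h2; exact h2, (pPrio_iff μ c s s').mp h3⟩
  · rintro ⟨s, s', c, h1, h2, h3⟩
    exact ⟨s, s', c, h1, rfl, by rw [pref_eq]; exact h2, (pPrio_iff μ c s s').mpr h3⟩

set_option maxRecDepth 100000 in
lemma no_stableN : ¬ ∃ μ : Fin 4 → Option (Fin 2), StableN μ := by decide

lemma famSize_le (s : Fin 4) : Mex.famSize s ≤ 2 := by
  have h : Mex.famSize s = (Finset.univ.filter fun s' : Fin 4 => fam s = fam s').card := by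
    unfold Market.famSize
    congr 1
    congr 1
  rw [h]
  exact (by decide :
    ∀ t : Fin 4, (Finset.univ.filter fun s' : Fin 4 => fam t = fam s').card ≤ 2) s

end NoPartialEx


/-- There exists a finite market with individual-level tie-breakers,
families of size at most two, and two levels, in which no contingent stable
matching under partial priorities exists. -/
theorem no_partial_stable_exists :
    ∃ M : Market,
      (∀ s, M.famSize s ≤ 2) ∧
      Fintype.card M.Level = 2 ∧
      ¬ ∃ μ : M.Student → Option M.School, M.PartialStable μ := by
  refine ⟨NoPartialEx.Mex, NoPartialEx.famSize_le, rfl, ?_⟩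
  rintro ⟨μ, h⟩
  exact NoPartialEx.no_stableN ⟨μ, (NoPartialEx.stable_iff μ).mp h⟩
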